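/- Let R be a ring and e ∈ R an idempotent with ReR = R. Suppose every two-sided ideal of R has a countable approximate unit consisting of idempotents. Then the map I ↦ eIe is a lattice isomorphism from the lattice of two-sided ideals of R onto the lattice of two-sided ideals of the corner ring eRe, with inverse sending an ideal J of eRe to the two-sided ideal of R generated by J. -/

import Mathlib

/-- The corner `eRe` of a ring `R` by an idempotent `e`, realized as the non-unital subring
of elements `x` with `e*x*e = x`. -/
def corner {R : Type*} [NonUnitalRing R] (e : R) (he : e * e = e) : NonUnitalSubring R where
  carrier := {x : R | e * x * e = x}
  zero_mem' := by simp
  add_mem' := by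
    intro a b ha hb
    simp only [Set.mem_setOf_eq] at *
    rw [mul_add, add_mul, ha, hb]
  neg_mem' := by
    intro a ha
    simp only [Set.mem_setOf_eq] at *
    rw [mul_neg, neg_mul, ha]
  mul_mem' := by
    intro a b ha hb
    simp only [Set.mem_setOf_eq] at *
    have ha' : e * a = a := by
      conv_lhs => rw [← ha]
      rw [← mul_assoc, ← mul_assoc, he, ha]
    have hb' : b * e = b := by
      conv_lhs => rw [← hb]
      rw [mul_assoc, mul_assoc, he, ← mul_assoc, hb]
    rw [← mul_assoc, ha', mul_assoc, hb']

section aux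
variable {R : Type*} [NonUnitalRing R] (e : R) (he : e * e = e)

lemma mem_corner_iff {x : R} : x ∈ corner e he ↔ e * x * e = x := Iff.rfl

include he in
lemma he' : ∀ x : R, e * (e * x) = e * x := fun x => by rw [← mul_assoc, he]

lemma corner_mem (r : R) : e * r * e ∈ corner e he := by
  rw [mem_corner_iff]
  simp only [mul_assoc, he, he' e he]

lemma e_mul_corner {x : R} (hx : x ∈ corner e he) : e * x = x := by
  rw [mem_corner_iff] at hx
  conv_lhs => rw [← hx]
  rw [← mul_assoc, ← mul_assoc, he, hx]

lemma corner_mul_e {x : R} (hx : x ∈ corner e he) : x * e = x := by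
  rw [mem_corner_iff] at hx
  conv_lhs => rw [← hx]
  rw [mul_assoc, mul_assoc, he, ← mul_assoc, hx]

/-- The map `I ↦ eIe` from ideals of `R` to ideals of the corner. -/
def cornerMap (I : TwoSidedIdeal R) : TwoSidedIdeal (corner e he) :=
  TwoSidedIdeal.mk' {x : corner e he | (x : R) ∈ I}
    (by simp)
    (fun ha hb => by simpa using I.add_mem ha hb)
    (fun ha => by simpa using I.neg_mem ha)
    (fun {x y} hy => by simpa using I.mul_mem_left _ _ hy)
    (fun {x y} hx => by simpa using I.mul_mem_right _ _ hx)

lemma mem_cornerMap {I : TwoSidedIdeal R} {x : corner e he} :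
    x ∈ cornerMap e he I ↔ (x : R) ∈ I :=
  TwoSidedIdeal.mem_mk' _ _ _ _ _ _ _

/-- The inverse map, sending an ideal of the corner to the ideal of `R` it generates. -/
abbrev spanMap (J : TwoSidedIdeal (corner e he)) : TwoSidedIdeal R :=
  TwoSidedIdeal.span (Subtype.val '' (J : Set (corner e he)))

lemma eSe_mem {I : TwoSidedIdeal R} {y : R} (hy : y ∈ I) :
    e * y * e ∈ Subtype.val '' ((cornerMap e he I : Set (corner e he))) :=
  ⟨⟨e * y * e, corner_mem e he y⟩,
    by
      rw [SetLike.mem_coe, mem_cornerMap]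
      exact I.mul_mem_right _ _ (I.mul_mem_left _ _ hy), rfl⟩

lemma spanMap_cornerMap_le (I : TwoSidedIdeal R) :
    spanMap e he (cornerMap e he I) ≤ I := by
  intro x hx
  refine TwoSidedIdeal.mem_span_iff.mp hx I ?_
  rintro - ⟨a, ha, rfl⟩
  exact (mem_cornerMap e he).mp ha

lemma eys_mem (I : TwoSidedIdeal R) {y : R} (hy : y ∈ I) {s : R}
    (hs : (∃ r, s = e * r) ∨ (∃ r, s = r * e) ∨ (∃ r₁ r₂, s = r₁ * e * r₂)) :
    e * y * s ∈ spanMap e he (cornerMap e he I) := by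
  have hsub : ∀ {z : R}, z ∈ Subtype.val '' ((cornerMap e he I : Set (corner e he))) →
      z ∈ spanMap e he (cornerMap e he I) := fun hz => TwoSidedIdeal.subset_span hz
  obtain ⟨r, rfl⟩ | ⟨r, rfl⟩ | ⟨r₁, r₂, rfl⟩ := hs
  · have h : e * y * (e * r) = (e * y * e) * r := by simp only [mul_assoc]
    rw [h]
    exact TwoSidedIdeal.mul_mem_right _ _ _ (hsub (eSe_mem e he hy))
  · have h : e * y * (r * e) = e * (y * r) * e := by simp only [mul_assoc]
    rw [h]
    exact hsub (eSe_mem e he (I.mul_mem_right _ _ hy))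
  · have h : e * y * (r₁ * e * r₂) = (e * (y * r₁) * e) * r₂ := by simp only [mul_assoc]
    rw [h]
    exact TwoSidedIdeal.mul_mem_right _ _ _ (hsub (eSe_mem e he (I.mul_mem_right _ _ hy)))

lemma le_spanMap_cornerMap
    (hfull : ∀ x : R, x ∈ AddSubgroup.closure
      {y : R | (∃ r, y = e * r) ∨ (∃ r, y = r * e) ∨ (∃ r₁ r₂, y = r₁ * e * r₂)})
    (I : TwoSidedIdeal R)
    (hfix : ∀ x ∈ I, ∃ u : R, u * x = x ∧ x * u = x) :
    I ≤ spanMap e he (cornerMap e he I) := by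
  intro x hx
  obtain ⟨u, h1, h2⟩ := hfix x hx
  set T : Set R :=
    {y : R | (∃ r, y = e * r) ∨ (∃ r, y = r * e) ∨ (∃ r₁ r₂, y = r₁ * e * r₂)} with hT
  set S := spanMap e he (cornerMap e he I) with hS
  have key : ∀ v ∈ AddSubgroup.closure T, ∀ w ∈ AddSubgroup.closure T, v * x * w ∈ S := by
    intro v hv
    induction hv using AddSubgroup.closure_induction with
    | mem t ht =>
      intro w hw
      induction hw using AddSubgroup.closure_induction with
      | mem s hs =>
        obtain ⟨r, rfl⟩ | ⟨r, rfl⟩ | ⟨r₁, r₂, rfl⟩ := ht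
        · have h : e * r * x * s = e * (r * x) * s := by simp only [mul_assoc]
          rw [h]
          exact eys_mem e he I (I.mul_mem_left r x hx) hs
        · have h : r * e * x * s = r * (e * x * s) := by simp only [mul_assoc]
          rw [h]
          exact S.mul_mem_left _ _ (eys_mem e he I hx hs)
        · have h : r₁ * e * r₂ * x * s = r₁ * (e * (r₂ * x) * s) := by
            simp only [mul_assoc]
          rw [h]
          exact S.mul_mem_left _ _ (eys_mem e he I (I.mul_mem_left r₂ x hx) hs)
      | zero => simpa using S.zero_mem
      | add a b ha hb iha ihb =>
        rw [mul_add]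
        exact S.add_mem iha ihb
      | neg a ha ih =>
        rw [mul_neg]
        exact S.neg_mem ih
    | zero =>
      intro w hw
      simpa using S.zero_mem
    | add a b ha hb iha ihb =>
      intro w hw
      rw [add_mul, add_mul]
      exact S.add_mem (iha w hw) (ihb w hw)
    | neg a ha ih =>
      intro w hw
      rw [neg_mul, neg_mul]
      exact S.neg_mem (ih w hw)
  have hx' : u * x * u = x := by rw [h1, h2]
  rw [← hx']
  exact key u (hfull u) u (hfull u)

open Pointwise Set in
lemma cornerMap_spanMap (J : TwoSidedIdeal (corner e he)) :
    cornerMap e he (spanMap e he J) = J := by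
  refine le_antisymm ?_ ?_
  · intro x hx
    rw [mem_cornerMap] at hx
    rw [TwoSidedIdeal.mem_span_iff_mem_addSubgroup_closure_nonunital] at hx
    have key : ∀ z ∈ AddSubgroup.closure
        ((Subtype.val '' (J : Set (corner e he))) ∪
          (Subtype.val '' (J : Set (corner e he))) * univ ∪
          univ * (Subtype.val '' (J : Set (corner e he))) ∪
          univ * (Subtype.val '' (J : Set (corner e he))) * univ),
        e * z * e ∈ Subtype.val '' (J : Set (corner e he)) := by
      intro z hz
      induction hz using AddSubgroup.closure_induction with
      | mem z hz =>
        rcases hz with ((hz | ⟨y, hy, r, -, rfl⟩) | ⟨r, -, y, hy, rfl⟩) |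
          ⟨-, ⟨r, -, y, hy, rfl⟩, r', -, rfl⟩
        · obtain ⟨j, hj, rfl⟩ := hz
          exact ⟨j, hj, ((mem_corner_iff e he).mp j.2).symm⟩
        · obtain ⟨j, hj, rfl⟩ := hy
          refine ⟨j * ⟨e * r * e, corner_mem e he r⟩, J.mul_mem_right _ _ hj, ?_⟩
          have l1 : ∀ a : R, e * ((j : R) * a) = (j : R) * a :=
            fun a => by rw [← mul_assoc, e_mul_corner e he j.2]
          have l2 : ∀ a : R, (j : R) * (e * a) = (j : R) * a :=
            fun a => by rw [← mul_assoc, corner_mul_e e he j.2]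
          show (j : R) * (e * r * e) = e * ((j : R) * r) * e
          simp only [mul_assoc, l1, l2, e_mul_corner e he j.2, corner_mul_e e he j.2]
        · obtain ⟨j, hj, rfl⟩ := hy
          refine ⟨(⟨e * r * e, corner_mem e he r⟩ : corner e he) * j,
            J.mul_mem_left _ _ hj, ?_⟩
          have l1 : ∀ a : R, e * ((j : R) * a) = (j : R) * a :=
            fun a => by rw [← mul_assoc, e_mul_corner e he j.2]
          have l2 : ∀ a : R, (j : R) * (e * a) = (j : R) * a :=
            fun a => by rw [← mul_assoc, corner_mul_e e he j.2]
          show (e * r * e) * (j : R) = e * (r * (j : R)) * e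
          simp only [mul_assoc, l1, l2, e_mul_corner e he j.2, corner_mul_e e he j.2]
        · obtain ⟨j, hj, rfl⟩ := hy
          refine ⟨(⟨e * r * e, corner_mem e he r⟩ : corner e he) * j *
            ⟨e * r' * e, corner_mem e he r'⟩,
            J.mul_mem_right _ _ (J.mul_mem_left _ _ hj), ?_⟩
          have l1 : ∀ a : R, e * ((j : R) * a) = (j : R) * a :=
            fun a => by rw [← mul_assoc, e_mul_corner e he j.2]
          have l2 : ∀ a : R, (j : R) * (e * a) = (j : R) * a :=
            fun a => by rw [← mul_assoc, corner_mul_e e he j.2]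
          show (e * r * e) * (j : R) * (e * r' * e) = e * (r * (j : R) * r') * e
          simp only [mul_assoc, l1, l2, e_mul_corner e he j.2, corner_mul_e e he j.2]
      | zero =>
        exact ⟨0, J.zero_mem, by simp⟩
      | add a b ha hb iha ihb =>
        obtain ⟨ja, hja, eqa⟩ := iha
        obtain ⟨jb, hjb, eqb⟩ := ihb
        refine ⟨ja + jb, J.add_mem hja hjb, ?_⟩
        push_cast
        rw [eqa, eqb, mul_add, add_mul]
      | neg a ha ih =>
        obtain ⟨ja, hja, eqa⟩ := ih
        refine ⟨-ja, J.neg_mem hja, ?_⟩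
        push_cast
        rw [eqa, mul_neg, neg_mul]
    obtain ⟨j, hj, hjx⟩ := key _ hx
    have hval : (j : R) = (x : R) := by rw [hjx]; exact x.2
    have : j = x := Subtype.val_injective hval
    rwa [← this]
  · intro j hj
    rw [mem_cornerMap]
    exact TwoSidedIdeal.subset_span ⟨j, hj, rfl⟩

end aux

/-- If `e` is an idempotent with `ReR = R` and every two-sided ideal of `R` has a countable
approximate unit of idempotents, then `I ↦ eIe` is a lattice isomorphism from the ideal
lattice of `R` onto the ideal lattice of the corner `eRe`, with inverse sending an ideal of
`eRe` to the two-sided ideal of `R` it generates. -/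
theorem stmt6 {R : Type*} [NonUnitalRing R] (e : R) (he : e * e = e)
    (hfull : ∀ x : R, x ∈ AddSubgroup.closure
      {y : R | (∃ r, y = e * r) ∨ (∃ r, y = r * e) ∨ (∃ r₁ r₂, y = r₁ * e * r₂)})
    (hau : ∀ I : TwoSidedIdeal R, ∃ u : ℕ → R,
      (∀ n, u n ∈ I) ∧ (∀ n, u n * u n = u n) ∧
      (∀ n, u (n + 1) * u n = u n ∧ u n * u (n + 1) = u n) ∧
      (∀ x ∈ I, ∃ n, u n * x = x ∧ x * u n = x)) :
    ∃ β : TwoSidedIdeal R ≃o TwoSidedIdeal (corner e he),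
      (∀ (I : TwoSidedIdeal R) (x : corner e he), x ∈ β I ↔ (x : R) ∈ I) ∧
      (∀ J : TwoSidedIdeal (corner e he),
        β.symm J = TwoSidedIdeal.span (Subtype.val '' (J : Set (corner e he)))) := by
  have hfix : ∀ I : TwoSidedIdeal R, ∀ x ∈ I, ∃ u : R, u * x = x ∧ x * u = x := by
    intro I x hx
    obtain ⟨u, -, -, -, h⟩ := hau I
    obtain ⟨n, h1, h2⟩ := h x hx
    exact ⟨u n, h1, h2⟩
  have li : ∀ I : TwoSidedIdeal R, spanMap e he (cornerMap e he I) = I := fun I =>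
    le_antisymm (spanMap_cornerMap_le e he I)
      (le_spanMap_cornerMap e he hfull I (hfix I))
  refine ⟨{ toEquiv := ⟨cornerMap e he, spanMap e he, li, cornerMap_spanMap e he⟩,
            map_rel_iff' := ?_ }, fun I x => mem_cornerMap e he, fun J => rfl⟩
  intro I I'
  constructor
  · intro h
    have h' : spanMap e he (cornerMap e he I) ≤ spanMap e he (cornerMap e he I') :=
      TwoSidedIdeal.span_mono (Set.image_mono (SetLike.coe_subset_coe.mpr h))
    rwa [li I, li I'] at h'
  · intro h x hx
    exact (mem_cornerMap e he).mpr (h ((mem_cornerMap e he).mp hx))
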